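/- For every x ∈ X with I(x) = {i_1 < … < i_s} and every g₀ ∈ (ℤ/2)^m, the stabilizer of the point [(x, g₀)] under the natural (ℤ/2)^m-action on M(X, λ) equals the set { ε_1·λ(i_1) + ⋯ + ε_s·λ(i_s) : ε ∈ {0,1}^s and τ_{i_s}^{ε_s}(⋯(τ_{i_1}^{ε_1}(x))⋯) = x }. -/

import Mathlib

open Set Relation

/-- An involutive panel structure on a topological space `X` with `k` panels. -/
structure PanelStructure (X : Type*) [TopologicalSpace X] (k : ℕ) where
  P : Fin k → Set X
  isClosed : ∀ i, IsClosed (P i)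
  τ : Fin k → X → X
  continuousOn : ∀ i, ContinuousOn (τ i) (P i)
  mapsTo : ∀ i, Set.MapsTo (τ i) (P i) (P i)
  invol : ∀ i, ∀ x ∈ P i, τ i (τ i x) = x
  interMapsTo : ∀ i j, Set.MapsTo (τ i) (P i ∩ P j) (P i ∩ P j)
  comm : ∀ i j, ∀ x ∈ P i ∩ P j, τ i (τ j x) = τ j (τ i x)

/-- The additive group `(ℤ/2)^m`, with the discrete topology. -/
abbrev Z2 (m : ℕ) : Type := Fin m → ZMod 2

instance (m : ℕ) : TopologicalSpace (Z2 m) := ⊥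
instance (m : ℕ) : DiscreteTopology (Z2 m) := ⟨rfl⟩

variable {X : Type*} [TopologicalSpace X] {k m : ℕ}

/-- The basic gluing relation `(x, g) ∼ (τᵢ x, g + λ i)` for `x ∈ Pᵢ`. -/
def glueRel (S : PanelStructure X k) {G : Type*} [AddGroup G] (lam : Fin k → G)
    (p q : X × G) : Prop :=
  ∃ i, p.1 ∈ S.P i ∧ q.1 = S.τ i p.1 ∧ q.2 = p.2 + lam i

/-- The equivalence relation generated by the gluing relation. -/
def glueSetoid (S : PanelStructure X k) {G : Type*} [AddGroup G] (lam : Fin k → G) :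
    Setoid (X × G) :=
  EqvGen.setoid (glueRel S lam)

/-- The glue-back construction `M(X, λ)`, as a quotient of `X × G`
(with `G` carrying its own topology, discrete in the case `G = Z2 m`). -/
abbrev GlueBack (S : PanelStructure X k) {G : Type*} [AddGroup G] (lam : Fin k → G) :
    Type _ :=
  Quotient (glueSetoid S lam)

/-- The class `[(x, g)]` in the glue-back construction. -/
abbrev glueMk (S : PanelStructure X k) {G : Type*} [AddGroup G] (lam : Fin k → G)
    (x : X) (g : G) : GlueBack S lam :=
  Quotient.mk (glueSetoid S lam) (x, g)

theorem eqvGen_map_of_map {α : Type*} {r : α → α → Prop} (f : α → α)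
    (hf : ∀ a b, r a b → r (f a) (f b)) :
    ∀ {a b : α}, EqvGen r a b → EqvGen r (f a) (f b) := by
  intro a b h
  induction h with
  | rel a b h => exact EqvGen.rel _ _ (hf _ _ h)
  | refl a => exact EqvGen.refl _
  | symm a b _ ih => exact EqvGen.symm _ _ ih
  | trans a b c _ _ ih₁ ih₂ => exact EqvGen.trans _ _ _ ih₁ ih₂

theorem glueRel_add (S : PanelStructure X k) {G : Type*} [AddGroup G] (lam : Fin k → G)
    (g : G) (a b : X × G) (h : glueRel S lam a b) :
    glueRel S lam (a.1, g + a.2) (b.1, g + b.2) := by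
  obtain ⟨i, h₁, h₂, h₃⟩ := h
  exact ⟨i, h₁, h₂, by rw [h₃, add_assoc]⟩

/-- The natural action of `G` on the glue-back construction:
`g · [(x, g₀)] = [(x, g + g₀)]`. -/
def glueAct (S : PanelStructure X k) {G : Type*} [AddGroup G] (lam : Fin k → G) (g : G) :
    GlueBack S lam → GlueBack S lam :=
  Quotient.map (fun p => (p.1, g + p.2))
    (fun a b (hab : EqvGen (glueRel S lam) a b) =>
      show EqvGen (glueRel S lam) _ _ from
        eqvGen_map_of_map (fun p => (p.1, g + p.2)) (glueRel_add S lam g) hab)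

theorem glueAct_mk (S : PanelStructure X k) {G : Type*} [AddGroup G] (lam : Fin k → G)
    (g : G) (x : X) (g₀ : G) :
    glueAct S lam g (glueMk S lam x g₀) = glueMk S lam x (g + g₀) := rfl

theorem glueAct_zero (S : PanelStructure X k) {G : Type*} [AddGroup G] (lam : Fin k → G)
    (p : GlueBack S lam) : glueAct S lam 0 p = p := by
  induction p using Quotient.ind with
  | _ a =>
    show Quotient.mk _ (a.1, 0 + a.2) = Quotient.mk _ a
    rw [zero_add]

theorem glueAct_add (S : PanelStructure X k) {G : Type*} [AddGroup G] (lam : Fin k → G)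
    (g h : G) (p : GlueBack S lam) :
    glueAct S lam (g + h) p = glueAct S lam g (glueAct S lam h p) := by
  induction p using Quotient.ind with
  | _ a =>
    show Quotient.mk _ (a.1, (g + h) + a.2) = Quotient.mk _ (a.1, g + (h + a.2))
    rw [add_assoc]

/-- Iterated application of the involutions:
`τ_{i_s}^{ε_s} ∘ ⋯ ∘ τ_{i_1}^{ε_1}` with the indices taken in increasing order. -/
def applyPanels (S : PanelStructure X k) (ε : Fin k → Bool) (x : X) : X :=
  (List.finRange k).foldl (fun y i => if ε i then S.τ i y else y) x

section Aux

variable (S : PanelStructure X k)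

/-- Apply the involutions along a list of indices. -/
def applyList (l : List (Fin k)) (x : X) : X :=
  l.foldl (fun y i => S.τ i y) x

@[simp] theorem applyList_nil (x : X) : applyList S [] x = x := rfl

@[simp] theorem applyList_cons (i : Fin k) (l : List (Fin k)) (x : X) :
    applyList S (i :: l) x = applyList S l (S.τ i x) := rfl

theorem applyList_append (l l' : List (Fin k)) (x : X) :
    applyList S (l ++ l') x = applyList S l' (applyList S l x) :=
  List.foldl_append

theorem applyPanels_eq_applyList (ε : Fin k → Bool) (x : X) :
    applyPanels S ε x = applyList S ((List.finRange k).filter (fun i => ε i)) x := by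
  show (List.finRange k).foldl _ x = _
  generalize List.finRange k = l
  induction l generalizing x with
  | nil => rfl
  | cons i t ih =>
      by_cases h : ε i = true
      · simp [h, ih]
      · simp at h
        simp [h, ih]

theorem mem_tau_iff {x : X} {i : Fin k} (hi : x ∈ S.P i) (j : Fin k) :
    S.τ i x ∈ S.P j ↔ x ∈ S.P j := by
  constructor
  · intro h
    have h2 : S.τ i x ∈ S.P i ∩ S.P j := ⟨S.mapsTo i hi, h⟩
    have h3 := S.interMapsTo i j h2
    rw [S.invol i x hi] at h3
    exact h3.2
  · intro h
    exact (S.interMapsTo i j ⟨hi, h⟩).2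

theorem mem_applyList_iff {l : List (Fin k)} {x : X} (hl : ∀ i ∈ l, x ∈ S.P i) (j : Fin k) :
    applyList S l x ∈ S.P j ↔ x ∈ S.P j := by
  induction l generalizing x with
  | nil => rfl
  | cons i t ih =>
      have hi : x ∈ S.P i := hl i (by simp)
      rw [applyList_cons, ih (fun a ha => (mem_tau_iff S hi a).2 (hl a (by simp [ha]))),
        mem_tau_iff S hi]

theorem applyList_perm {l l' : List (Fin k)} (h : List.Perm l l') :
    ∀ x : X, (∀ i ∈ l, x ∈ S.P i) → applyList S l x = applyList S l' x := by
  induction h with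
  | nil => intro x _; rfl
  | cons i h ih =>
      intro x hx
      have hi : x ∈ S.P i := hx i (by simp)
      simp only [applyList_cons]
      exact ih (S.τ i x) (fun a ha => (mem_tau_iff S hi a).2 (hx a (by simp [ha])))
  | swap i j t =>
      intro x hx
      have hi : x ∈ S.P i := hx i (by simp)
      have hj : x ∈ S.P j := hx j (by simp)
      simp only [applyList_cons]
      rw [S.comm j i x ⟨hj, hi⟩]
  | trans h1 h2 ih1 ih2 =>
      intro x hx
      rw [ih1 x hx, ih2 x (fun a ha => hx a (h1.mem_iff.2 ha))]

theorem count_filter_finRange (ε : Fin k → Bool) (j : Fin k) :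
    ((List.finRange k).filter (fun i => ε i)).count j = if ε j then 1 else 0 := by
  by_cases h : ε j = true
  · rw [List.count_filter (by simpa using h), if_pos h]
    exact List.count_eq_one_of_mem (List.nodup_finRange k) (List.mem_finRange j)
  · rw [if_neg h, List.count_eq_zero]
    intro hmem
    exact h (List.of_mem_filter hmem)

theorem count_finRange (a : Fin k) : (List.finRange k).count a = 1 :=
  List.count_eq_one_of_mem (List.nodup_finRange k) (List.mem_finRange a)

theorem mem_of_mem_filter_finRange {ε : Fin k → Bool} {i : Fin k}
    (h : i ∈ (List.finRange k).filter (fun i => ε i)) : ε i = true :=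
  List.of_mem_filter h

/-- Key swap lemma: applying `τ i` first and then the canonically ordered word for `ε`
equals the canonically ordered word for `ε` with the `i`-th bit flipped. -/
theorem applyPanels_tau {ε : Fin k → Bool} {x : X} {i : Fin k} (hi : x ∈ S.P i)
    (hsupp : ∀ j, ε j = true → x ∈ S.P j) :
    applyPanels S ε (S.τ i x) = applyPanels S (Function.update ε i (!ε i)) x := by
  rw [applyPanels_eq_applyList, applyPanels_eq_applyList]
  rw [show applyList S ((List.finRange k).filter (fun j => ε j)) (S.τ i x)
      = applyList S (i :: (List.finRange k).filter (fun j => ε j)) x from rfl]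
  have hmem : ∀ a ∈ i :: (List.finRange k).filter (fun j => ε j), x ∈ S.P a := by
    intro a ha
    rcases List.mem_cons.1 ha with h | h
    · exact h ▸ hi
    · exact hsupp a (mem_of_mem_filter_finRange h)
  by_cases hε : ε i = true
  · -- flipped bit is false; the word contains `i`, pull it to the front and cancel
    have hperm : List.Perm (i :: (List.finRange k).filter (fun j => ε j))
        (i :: i :: (List.finRange k).filter (fun j => Function.update ε i (!ε i) j)) := by
      apply List.perm_iff_count.mpr
      intro a
      by_cases ha : a = i
      · subst ha
        simp [List.count_cons, count_filter_finRange, count_finRange, hε]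
      · simp [List.count_cons, count_filter_finRange, Function.update_of_ne ha, ha, Ne.symm ha]
    rw [applyList_perm S hperm x hmem]
    simp only [applyList_cons]
    rw [S.invol i x hi]
  · -- flipped bit is true; the word with bit set is a permutation of `i ::` the word
    have hperm : List.Perm (i :: (List.finRange k).filter (fun j => ε j))
        ((List.finRange k).filter (fun j => Function.update ε i (!ε i) j)) := by
      apply List.perm_iff_count.mpr
      intro a
      by_cases ha : a = i
      · subst ha
        simp [List.count_cons, count_filter_finRange, count_finRange, hε]
      · simp [List.count_cons, count_filter_finRange, Function.update_of_ne ha, ha, Ne.symm ha]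
    rw [applyList_perm S hperm x hmem]

/-- Any word in panels containing `x` equals the canonically ordered word given by
the parity of the counts. -/
theorem applyList_eq_applyPanels_parity (l : List (Fin k)) (x : X)
    (hl : ∀ i ∈ l, x ∈ S.P i) :
    applyList S l x = applyPanels S (fun i => decide (Odd (l.count i))) x := by
  induction l generalizing x with
  | nil =>
      have : (fun i : Fin k => decide (Odd (List.count i ([] : List (Fin k))))) =
          fun _ => false := by funext i; simp
      rw [this, applyPanels_eq_applyList]
      simp
  | cons a t ih =>
      have ha : x ∈ S.P a := hl a (by simp)
      rw [applyList_cons, ih (S.τ a x)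
        (fun i hi => (mem_tau_iff S ha i).2 (hl i (by simp [hi])))]
      have hsupp : ∀ j, decide (Odd (t.count j)) = true → x ∈ S.P j := by
        intro j hj
        have : t.count j ≠ 0 := by
          intro h0
          rw [h0] at hj
          simp at hj
        exact hl j (by simp [List.count_pos_iff.1 (Nat.pos_of_ne_zero this)])
      rw [applyPanels_tau S ha hsupp]
      congr 1
      funext j
      by_cases hj : j = a
      · subst hj
        simp only [Function.update_self, List.count_cons_self, Nat.odd_add_one]
        simp only [decide_not]
      · simp [List.count_cons, Function.update_of_ne hj, hj,
          Ne.symm hj]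

theorem mem_applyPanels_iff {ε : Fin k → Bool} {x : X}
    (hsupp : ∀ j, ε j = true → x ∈ S.P j) (j : Fin k) :
    applyPanels S ε x ∈ S.P j ↔ x ∈ S.P j := by
  rw [applyPanels_eq_applyList]
  exact mem_applyList_iff S (fun i hi => hsupp i (mem_of_mem_filter_finRange hi)) j

theorem applyPanels_applyPanels {ε₁ ε₂ : Fin k → Bool} {x : X}
    (h1 : ∀ j, ε₁ j = true → x ∈ S.P j) (h2 : ∀ j, ε₂ j = true → x ∈ S.P j) :
    applyPanels S ε₂ (applyPanels S ε₁ x) = applyPanels S (fun i => xor (ε₁ i) (ε₂ i)) x := by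
  rw [applyPanels_eq_applyList S ε₁, applyPanels_eq_applyList S ε₂, ← applyList_append]
  rw [applyList_eq_applyPanels_parity S _ x ?hmem]
  case hmem =>
    intro i hi
    rcases List.mem_append.1 hi with h | h
    · exact h1 i (mem_of_mem_filter_finRange h)
    · exact h2 i (mem_of_mem_filter_finRange h)
  congr 1
  funext i
  rw [List.count_append, count_filter_finRange, count_filter_finRange]
  cases hb1 : ε₁ i <;> cases hb2 : ε₂ i <;> simp

theorem applyPanels_false (x : X) : applyPanels S (fun _ => false) x = x := by
  rw [applyPanels_eq_applyList]; simp

end Aux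

section Main

variable (S : PanelStructure X k) (lam : Fin k → Z2 m)

theorem sum_map_filter_eq (ε : Fin k → Bool) :
    (((List.finRange k).filter (fun i => ε i)).map lam).sum
      = ∑ i : Fin k, (if ε i then lam i else 0) := by
  rw [Fin.sum_univ_def]
  generalize List.finRange k = l
  induction l with
  | nil => rfl
  | cons a t ih =>
      by_cases h : ε a = true
      · simp [h, ih]
      · simp only [Bool.not_eq_true] at h
        simp [h, ih]

theorem eqvGen_applyList (l : List (Fin k)) (x : X) (h : Z2 m)
    (hl : ∀ i ∈ l, x ∈ S.P i) :
    EqvGen (glueRel S lam) (x, h) (applyList S l x, h + (l.map lam).sum) := by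
  induction l generalizing x h with
  | nil => simpa using EqvGen.refl (x, h)
  | cons i t ih =>
      have hi : x ∈ S.P i := hl i (by simp)
      refine EqvGen.trans _ ((S.τ i x, h + lam i)) _
        (EqvGen.rel _ _ ⟨i, hi, rfl, rfl⟩) ?_
      have := ih (S.τ i x) (h + lam i)
        (fun a ha => (mem_tau_iff S hi a).2 (hl a (by simp [ha])))
      simpa [add_assoc] using this

theorem z2_add_self (a : Z2 m) : a + a = 0 := by
  funext j
  show a j + a j = 0
  exact CharTwo.add_self_eq_zero (a j)

/-- The explicit description of the full equivalence relation. -/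
theorem eqvGen_exists {p q : X × Z2 m} (h : EqvGen (glueRel S lam) p q) :
    ∃ ε : Fin k → Bool, (∀ i, ε i = true → p.1 ∈ S.P i) ∧
      applyPanels S ε p.1 = q.1 ∧ q.2 = p.2 + ∑ i : Fin k, (if ε i then lam i else 0) := by
  induction h with
  | rel a b hab =>
      obtain ⟨i, hi, h1, h2⟩ := hab
      refine ⟨fun j => decide (j = i), fun j hj => ?_, ?_, ?_⟩
      · rw [decide_eq_true_eq] at hj; exact hj ▸ hi
      · rw [applyPanels_eq_applyList]
        have hperm : List.Perm ((List.finRange k).filter (fun j => decide (j = i))) [i] := by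
          apply List.perm_iff_count.mpr
          intro a
          by_cases ha : a = i <;>
            simp [count_filter_finRange, count_finRange, List.count_cons, ha, @eq_comm _ i a]
        rw [applyList_perm S hperm a.1 (fun j hj => by
          have := mem_of_mem_filter_finRange hj
          rw [decide_eq_true_eq] at this
          exact this ▸ hi)]
        simp [h1]
      · rw [h2]
        congr 1
        simp
  | refl a =>
      refine ⟨fun _ => false, by simp, applyPanels_false S a.1, by simp⟩
  | symm a b hab ih =>
      obtain ⟨ε, hsupp, happ, hsum⟩ := ih
      have hsupp' : ∀ i, ε i = true → b.1 ∈ S.P i := by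
        intro i hi
        rw [← happ, mem_applyPanels_iff S hsupp]
        exact hsupp i hi
      refine ⟨ε, hsupp', ?_, ?_⟩
      · rw [← happ, applyPanels_applyPanels S hsupp hsupp]
        have : (fun i => xor (ε i) (ε i)) = fun _ => false := by
          funext i; exact Bool.xor_self (ε i)
        rw [this, applyPanels_false]
      · rw [hsum, add_assoc, z2_add_self, add_zero]
  | trans a b c hab hbc ih1 ih2 =>
      obtain ⟨ε₁, hs1, ha1, hg1⟩ := ih1
      obtain ⟨ε₂, hs2, ha2, hg2⟩ := ih2
      have hs2' : ∀ i, ε₂ i = true → a.1 ∈ S.P i := by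
        intro i hi
        have := hs2 i hi
        rw [← ha1, mem_applyPanels_iff S hs1] at this
        exact this
      refine ⟨fun i => xor (ε₁ i) (ε₂ i), fun i hi => ?_, ?_, ?_⟩
      · by_cases h : ε₁ i = true
        · exact hs1 i h
        · apply hs2' i
          simp only [Bool.not_eq_true] at h
          simpa [h] using hi
      · rw [← applyPanels_applyPanels S hs1 hs2', ha1, ha2]
      · rw [hg2, hg1, add_assoc]
        congr 1
        rw [← Finset.sum_add_distrib]
        apply Finset.sum_congr rfl
        intro i _
        cases hb1 : ε₁ i <;> cases hb2 : ε₂ i <;>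
          simp [hb1, hb2, z2_add_self]

end Main

/-- The stabilizer of `[(x, g₀)]` under the natural `(ℤ/2)^m`-action on
`M(X, λ)` is the set of sums `ε_1·λ(i_1) + ⋯ + ε_s·λ(i_s)` over those `ε ∈ {0,1}^s`
(indexed by the panels containing `x`) with `τ_{i_s}^{ε_s}(⋯(τ_{i_1}^{ε_1}(x))⋯) = x`. -/
theorem glueBack_stabilizer_eq (S : PanelStructure X k) (lam : Fin k → Z2 m)
    (x : X) (g₀ : Z2 m) :
    {g : Z2 m | glueAct S lam g (glueMk S lam x g₀) = glueMk S lam x g₀} =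
      {g : Z2 m | ∃ ε : Fin k → Bool, (∀ i, ε i = true → x ∈ S.P i) ∧
        applyPanels S ε x = x ∧
        g = ∑ i : Fin k, (if ε i then lam i else 0)} := by
  ext g
  simp only [Set.mem_setOf_eq]
  constructor
  · intro h
    have h' : EqvGen (glueRel S lam) (x, g + g₀) (x, g₀) := Quotient.exact h
    obtain ⟨ε, hsupp, happ, hsum⟩ := eqvGen_exists S lam h'
    refine ⟨ε, hsupp, happ, ?_⟩
    set s := ∑ i : Fin k, (if ε i then lam i else 0) with hs
    have h0 : g + s = 0 := by
      have h1 : (g + g₀) + s = g₀ := hsum.symm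
      have h2 : (g + s) + g₀ = (g + g₀) + s := by abel
      rw [h1] at h2
      have h3 : (g + s) + g₀ = 0 + g₀ := by rw [zero_add, h2]
      exact add_right_cancel h3
    calc g = g + (s + s) := by rw [z2_add_self, add_zero]
      _ = (g + s) + s := (add_assoc _ _ _).symm
      _ = s := by rw [h0, zero_add]
  · rintro ⟨ε, hsupp, happ, hg⟩
    apply Quotient.sound
    have chain := eqvGen_applyList S lam ((List.finRange k).filter fun i => ε i) x g₀
      (fun i hi => hsupp i (mem_of_mem_filter_finRange hi))
    rw [← applyPanels_eq_applyList, happ, sum_map_filter_eq, ← hg, add_comm g₀ g] at chain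
    exact EqvGen.symm _ _ chain
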